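/- arXiv:1503.02673 — 2 statements merged into one kernel-verified Lean document; each statement's English description precedes it below -/
import Mathlib

section
/- Let $Y$ be a set, and let $(a_n)_{n\ge0}, (b_m)_{m\ge0}$ be nonnegative summable sequences with $\sum_n a_n = \sum_m b_m = 1$. Let $x_n, y_m \in Y$ be mutually distinct points and define $L : B(Y^2) \to \mathbb{R}$ by $Lf = \sum_{n,m} a_n b_m f(x_n, y_m)$. Then for all bounded $f, g$: $|L(fg) - L(f)L(g)| \le \frac{1}{2}\left(1 - \sum_n a_n^2 \cdot \sum_m b_m^2\right) \mathrm{osc}_L(f)\,\mathrm{osc}_L(g)$, where $\mathrm{osc}_L(f) = \sup\{|f(x_n,y_m) - f(x_i,y_j)| : n,m,i,j \ge 0\}$. -/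
open Function

set_option maxHeartbeats 1000000 in
lemma stmt15_core {ι : Type*} (w F G : ι → ℝ) (hw0 : ∀ p, 0 ≤ w p) (hwS : Summable w)
    (hw1 : ∑' p, w p = 1) (CF CG : ℝ) (hF : ∀ p, |F p| ≤ CF) (hG : ∀ p, |G p| ≤ CG)
    (DF DG : ℝ) (hDF : ∀ p q, |F p - F q| ≤ DF) (hDG : ∀ p q, |G p - G q| ≤ DG) :
    |(∑' p, w p * F p * G p) - (∑' p, w p * F p) * (∑' p, w p * G p)| ≤
      (1 / 2) * (1 - ∑' p, (w p) ^ 2) * DF * DG := by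
  classical
  have hne : Nonempty ι := by
    by_contra h
    rw [not_nonempty_iff] at h
    rw [tsum_empty] at hw1
    norm_num at hw1
  obtain ⟨p₀⟩ := hne
  have hCF0 : 0 ≤ CF := le_trans (abs_nonneg _) (hF p₀)
  have hCG0 : 0 ≤ CG := le_trans (abs_nonneg _) (hG p₀)
  have hDF0 : 0 ≤ DF := by simpa using hDF p₀ p₀
  have hDG0 : 0 ≤ DG := by simpa using hDG p₀ p₀
  -- norm bounds
  have habsw : ∀ p, |w p| = w p := fun p => abs_of_nonneg (hw0 p)
  have bnd : ∀ (H : ι → ℝ) (C : ℝ), (∀ p, |H p| ≤ C) → ∀ p, ‖w p * H p‖ ≤ w p * C := by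
    intro H C hH p
    rw [Real.norm_eq_abs, abs_mul, habsw]
    exact mul_le_mul_of_nonneg_left (hH p) (hw0 p)
  have bnd2 : ∀ p, ‖w p * F p * G p‖ ≤ w p * (CF * CG) := by
    intro p
    rw [Real.norm_eq_abs, abs_mul, abs_mul, habsw, mul_assoc]
    exact mul_le_mul_of_nonneg_left
      (mul_le_mul (hF p) (hG p) (abs_nonneg _) hCF0) (hw0 p)
  -- summabilities
  have hSFG : Summable (fun p => w p * F p * G p) :=
    Summable.of_norm_bounded (hwS.mul_right (CF * CG)) bnd2
  have hSF : Summable (fun p => w p * F p) :=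
    Summable.of_norm_bounded (hwS.mul_right CF) (bnd F CF hF)
  have hSG : Summable (fun p => w p * G p) :=
    Summable.of_norm_bounded (hwS.mul_right CG) (bnd G CG hG)
  have hSFGn : Summable (fun p => ‖w p * F p * G p‖) :=
    (hwS.mul_right (CF * CG)).of_nonneg_of_le (fun p => norm_nonneg _) bnd2
  have hSFn : Summable (fun p => ‖w p * F p‖) :=
    (hwS.mul_right CF).of_nonneg_of_le (fun p => norm_nonneg _) (bnd F CF hF)
  have hSGn : Summable (fun p => ‖w p * G p‖) :=
    (hwS.mul_right CG).of_nonneg_of_le (fun p => norm_nonneg _) (bnd G CG hG)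
  have hSwn : Summable (fun p => ‖w p‖) := by
    simpa [Real.norm_eq_abs, habsw] using hwS
  set S := ∑' p, w p * F p * G p with hS
  set A := ∑' p, w p * F p with hA
  set B := ∑' p, w p * G p with hB
  -- the four product-summables
  have h1 : Summable (fun r : ι × ι => (w r.1 * F r.1 * G r.1) * w r.2) :=
    summable_mul_of_summable_norm (f := fun p => w p * F p * G p) (g := w) hSFGn hSwn
  have h2 : Summable (fun r : ι × ι => (w r.1 * F r.1) * (w r.2 * G r.2)) :=
    summable_mul_of_summable_norm (f := fun p => w p * F p) (g := fun p => w p * G p) hSFn hSGn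
  have h3 : Summable (fun r : ι × ι => (w r.1 * G r.1) * (w r.2 * F r.2)) :=
    summable_mul_of_summable_norm (f := fun p => w p * G p) (g := fun p => w p * F p) hSGn hSFn
  have h4 : Summable (fun r : ι × ι => w r.1 * (w r.2 * F r.2 * G r.2)) :=
    summable_mul_of_summable_norm (f := w) (g := fun p => w p * F p * G p) hSwn hSFGn
  have e1 : ∑' r : ι × ι, (w r.1 * F r.1 * G r.1) * w r.2 = S * 1 := by
    rw [← hw1]; exact (tsum_mul_tsum_of_summable_norm (f := fun p => w p * F p * G p) (g := w) hSFGn hSwn).symm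
  have e2 : ∑' r : ι × ι, (w r.1 * F r.1) * (w r.2 * G r.2) = A * B := by
    show _ = (∑' p, w p * F p) * (∑' p, w p * G p); exact (tsum_mul_tsum_of_summable_norm (f := fun p => w p * F p) (g := fun p => w p * G p) hSFn hSGn).symm
  have e3 : ∑' r : ι × ι, (w r.1 * G r.1) * (w r.2 * F r.2) = B * A := by
    show _ = (∑' p, w p * G p) * (∑' p, w p * F p); exact (tsum_mul_tsum_of_summable_norm (f := fun p => w p * G p) (g := fun p => w p * F p) hSGn hSFn).symm
  have e4 : ∑' r : ι × ι, w r.1 * (w r.2 * F r.2 * G r.2) = 1 * S := by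
    rw [← hw1]; exact (tsum_mul_tsum_of_summable_norm (f := w) (g := fun p => w p * F p * G p) hSwn hSFGn).symm
  set T : ι × ι → ℝ := fun r => w r.1 * w r.2 * (F r.1 - F r.2) * (G r.1 - G r.2) with hT
  have hTeq : T = fun r => ((w r.1 * F r.1 * G r.1) * w r.2 + w r.1 * (w r.2 * F r.2 * G r.2))
      - ((w r.1 * F r.1) * (w r.2 * G r.2) + (w r.1 * G r.1) * (w r.2 * F r.2)) := by
    funext r; ring
  have hTS : Summable T := by rw [hTeq]; exact (h1.add h4).sub (h2.add h3)
  have key : ∑' r, T r = 2 * (S - A * B) := by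
    rw [hTeq, Summable.tsum_sub (h1.add h4) (h2.add h3), Summable.tsum_add h1 h4, Summable.tsum_add h2 h3,
      e1, e2, e3, e4]
    ring
  -- bound
  set Bnd : ι × ι → ℝ := fun r => if r.1 = r.2 then 0 else w r.1 * w r.2 * (DF * DG) with hBnd
  have hTle : ∀ r, ‖T r‖ ≤ Bnd r := by
    intro r
    by_cases h : r.1 = r.2
    · simp [hBnd, hT, h]
    · simp only [hBnd, if_neg h, hT, Real.norm_eq_abs]
      rw [abs_mul, abs_mul, abs_mul, habsw, habsw, mul_assoc, mul_assoc, mul_assoc]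
      refine mul_le_mul_of_nonneg_left (mul_le_mul_of_nonneg_left ?_ (hw0 _)) (hw0 _)
      exact mul_le_mul (hDF _ _) (hDG _ _) (abs_nonneg _) hDF0
  have hwprod : Summable (fun r : ι × ι => w r.1 * w r.2) :=
    summable_mul_of_summable_norm (f := w) (g := w) hSwn hSwn
  have hBndS : Summable Bnd := by
    refine (hwprod.mul_right (DF * DG)).of_nonneg_of_le ?_ ?_
    · intro r
      by_cases h : r.1 = r.2 <;>
        simp [hBnd, h, mul_nonneg, hw0, hDF0, hDG0, mul_nonneg (mul_nonneg (hw0 _) (hw0 _))]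
    · intro r
      by_cases h : r.1 = r.2
      · simp only [hBnd, if_pos h]
        exact mul_nonneg (mul_nonneg (hw0 _) (hw0 _)) (mul_nonneg hDF0 hDG0)
      · simp [hBnd, if_neg h]
  -- diagonal tsum
  have hdiag : ∑' r : ι × ι, (if r.1 = r.2 then w r.1 * w r.2 * (DF * DG) else 0)
      = (∑' p, (w p) ^ 2) * (DF * DG) := by
    have hi : Injective (fun p : ι => ((p, p) : ι × ι)) := by
      intro p q h
      exact congrArg Prod.fst h
    have hsupp : Function.support (fun r : ι × ι => if r.1 = r.2 then w r.1 * w r.2 * (DF * DG) else 0)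
        ⊆ Set.range (fun p : ι => ((p, p) : ι × ι)) := by
      intro r hr
      simp only [Function.mem_support, ne_eq] at hr
      by_cases h : r.1 = r.2
      · exact ⟨r.1, by rw [Prod.ext_iff]; exact ⟨rfl, h⟩⟩
      · exact absurd (if_neg h) hr
    rw [← hi.tsum_eq hsupp]
    simp only [if_pos rfl]
    rw [← tsum_mul_right]
    congr 1
    funext p
    simp [sq, mul_assoc]
  have hsum_ww : ∑' r : ι × ι, w r.1 * w r.2 = 1 := by
    rw [← (tsum_mul_tsum_of_summable_norm (f := w) (g := w) hSwn hSwn), hw1, one_mul]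
  have hdiagS : Summable (fun r : ι × ι => if r.1 = r.2 then w r.1 * w r.2 * (DF * DG) else 0) := by
    refine Summable.congr ((hwprod.mul_right (DF * DG)).sub hBndS) ?_
    intro r
    by_cases h : r.1 = r.2 <;> simp [hBnd, h]
  have hBndeq : ∑' r, Bnd r = (1 - ∑' p, (w p) ^ 2) * (DF * DG) := by
    have hpt : Bnd = fun r : ι × ι => w r.1 * w r.2 * (DF * DG) -
        (if r.1 = r.2 then w r.1 * w r.2 * (DF * DG) else 0) := by
      funext r
      by_cases h : r.1 = r.2 <;> simp [hBnd, h]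
    rw [hpt, Summable.tsum_sub (hwprod.mul_right (DF * DG)) hdiagS, hdiag, tsum_mul_right, hsum_ww]
    ring
  have hTnS : Summable (fun r => ‖T r‖) :=
    hBndS.of_nonneg_of_le (fun r => norm_nonneg _) hTle
  have hmain : |∑' r, T r| ≤ (1 - ∑' p, (w p) ^ 2) * (DF * DG) := by
    calc |∑' r, T r| ≤ ∑' r, ‖T r‖ := by
          simpa using norm_tsum_le_tsum_norm hTnS
      _ ≤ ∑' r, Bnd r := Summable.tsum_le_tsum hTle hTnS hBndS
      _ = _ := hBndeq
  rw [key] at hmain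
  rw [abs_mul, abs_two] at hmain
  have h2 : (0:ℝ) < 2 := two_pos
  nlinarith [abs_nonneg (S - A * B)]




/-- discrete Chebyshev–Grüss inequality with oscillations for the positive
linear functional `L f = ∑ₙ ∑ₘ aₙ bₘ f (xₙ, yₘ)` built from nonnegative weights summing
to one. -/
theorem stmt15 {Y : Type*} (a b : ℕ → ℝ)
    (ha0 : ∀ n, 0 ≤ a n) (hb0 : ∀ m, 0 ≤ b m)
    (haS : Summable a) (hbS : Summable b)
    (ha1 : ∑' n, a n = 1) (hb1 : ∑' m, b m = 1)
    (x y : ℕ → Y) (hx : Function.Injective x) (hy : Function.Injective y)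
    (f g : Y → Y → ℝ)
    (hf : ∃ C : ℝ, ∀ p q : Y, |f p q| ≤ C) (hg : ∃ C : ℝ, ∀ p q : Y, |g p q| ≤ C) :
    |(∑' n, ∑' m, a n * b m * f (x n) (y m) * g (x n) (y m)) -
        (∑' n, ∑' m, a n * b m * f (x n) (y m)) *
          (∑' n, ∑' m, a n * b m * g (x n) (y m))| ≤
      (1 / 2) * (1 - (∑' n, (a n) ^ 2) * (∑' m, (b m) ^ 2)) *
        (sSup {v | ∃ n m i j : ℕ, v = |f (x n) (y m) - f (x i) (y j)|}) *
        (sSup {v | ∃ n m i j : ℕ, v = |g (x n) (y m) - g (x i) (y j)|}) := by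
  obtain ⟨Cf, hCf⟩ := hf
  obtain ⟨Cg, hCg⟩ := hg
  set w : ℕ × ℕ → ℝ := fun p => a p.1 * b p.2 with hwdef
  set F : ℕ × ℕ → ℝ := fun p => f (x p.1) (y p.2) with hFdef
  set G : ℕ × ℕ → ℝ := fun p => g (x p.1) (y p.2) with hGdef
  have han : Summable (fun n => ‖a n‖) := by
    simpa [Real.norm_eq_abs, abs_of_nonneg, ha0] using haS
  have hbn : Summable (fun m => ‖b m‖) := by
    simpa [Real.norm_eq_abs, abs_of_nonneg, hb0] using hbS
  have hw0 : ∀ p, 0 ≤ w p := fun p => mul_nonneg (ha0 _) (hb0 _)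
  have hwS : Summable w := summable_mul_of_summable_norm (f := a) (g := b) han hbn
  have hw1 : ∑' p, w p = 1 := by
    rw [← (tsum_mul_tsum_of_summable_norm (f := a) (g := b) han hbn), ha1, hb1, one_mul]
  -- oscillation sups
  set DF := sSup {v | ∃ n m i j : ℕ, v = |f (x n) (y m) - f (x i) (y j)|} with hDFdef
  set DG := sSup {v | ∃ n m i j : ℕ, v = |g (x n) (y m) - g (x i) (y j)|} with hDGdef
  have habs_sub : ∀ (u v C : ℝ), |u| ≤ C → |v| ≤ C → |u - v| ≤ C + C := by
    intro u v C hu hv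
    calc |u - v| ≤ |u| + |v| := abs_sub u v
      _ ≤ C + C := add_le_add hu hv
  have hbddF : BddAbove {v | ∃ n m i j : ℕ, v = |f (x n) (y m) - f (x i) (y j)|} := by
    refine ⟨Cf + Cf, ?_⟩
    rintro v ⟨n, m, i, j, rfl⟩
    exact habs_sub _ _ _ (hCf _ _) (hCf _ _)
  have hbddG : BddAbove {v | ∃ n m i j : ℕ, v = |g (x n) (y m) - g (x i) (y j)|} := by
    refine ⟨Cg + Cg, ?_⟩
    rintro v ⟨n, m, i, j, rfl⟩
    exact habs_sub _ _ _ (hCg _ _) (hCg _ _)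
  have hDF : ∀ p q : ℕ × ℕ, |F p - F q| ≤ DF := fun p q =>
    le_csSup hbddF ⟨p.1, p.2, q.1, q.2, rfl⟩
  have hDG : ∀ p q : ℕ × ℕ, |G p - G q| ≤ DG := fun p q =>
    le_csSup hbddG ⟨p.1, p.2, q.1, q.2, rfl⟩
  have hFb : ∀ p, |F p| ≤ Cf := fun p => hCf _ _
  have hGb : ∀ p, |G p| ≤ Cg := fun p => hCg _ _
  have key := stmt15_core w F G hw0 hwS hw1 Cf Cg hFb hGb DF DG hDF hDG
  -- identify tsums
  have hbndH : ∀ (H : ℕ × ℕ → ℝ) (C : ℝ), (∀ p, |H p| ≤ C) → Summable (fun p => w p * H p) := by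
    intro H C hH
    refine Summable.of_norm_bounded (hwS.mul_right C) ?_
    intro p
    rw [Real.norm_eq_abs, abs_mul, abs_of_nonneg (hw0 p)]
    exact mul_le_mul_of_nonneg_left (hH p) (hw0 p)
  have hSFG : Summable (fun p => w p * F p * G p) := by
    have := hbndH (fun p => F p * G p) (Cf * Cg) (fun p => by
      rw [abs_mul]
      exact mul_le_mul (hFb p) (hGb p) (abs_nonneg _) (le_trans (abs_nonneg _) (hFb (0,0))))
    exact this.congr (fun p => by ring)
  have hSF : Summable (fun p => w p * F p) := hbndH F Cf hFb
  have hSG : Summable (fun p => w p * G p) := hbndH G Cg hGb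
  have eFG : ∑' p : ℕ × ℕ, w p * F p * G p
      = ∑' n, ∑' m, a n * b m * f (x n) (y m) * g (x n) (y m) := by
    rw [Summable.tsum_prod' hSFG hSFG.prod_factor]
  have eF : ∑' p : ℕ × ℕ, w p * F p = ∑' n, ∑' m, a n * b m * f (x n) (y m) := by
    rw [Summable.tsum_prod' hSF hSF.prod_factor]
  have eG : ∑' p : ℕ × ℕ, w p * G p = ∑' n, ∑' m, a n * b m * g (x n) (y m) := by
    rw [Summable.tsum_prod' hSG hSG.prod_factor]
  -- second moment
  have ha2S : Summable (fun n => (a n) ^ 2) := by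
    refine haS.of_nonneg_of_le (fun n => sq_nonneg _) ?_
    intro n
    have h1 : a n ≤ 1 := ha1 ▸ Summable.le_tsum haS n (fun j _ => ha0 j)
    nlinarith [ha0 n]
  have hb2S : Summable (fun m => (b m) ^ 2) := by
    refine hbS.of_nonneg_of_le (fun m => sq_nonneg _) ?_
    intro m
    have h1 : b m ≤ 1 := hb1 ▸ Summable.le_tsum hbS m (fun j _ => hb0 j)
    nlinarith [hb0 m]
  have ha2n : Summable (fun n => ‖(a n) ^ 2‖) := by
    simpa [Real.norm_eq_abs, abs_of_nonneg, sq_nonneg] using ha2S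
  have hb2n : Summable (fun m => ‖(b m) ^ 2‖) := by
    simpa [Real.norm_eq_abs, abs_of_nonneg, sq_nonneg] using hb2S
  have e2 : ∑' p : ℕ × ℕ, (w p) ^ 2 = (∑' n, (a n) ^ 2) * (∑' m, (b m) ^ 2) := by
    rw [tsum_mul_tsum_of_summable_norm (f := fun n => (a n) ^ 2) (g := fun m => (b m) ^ 2) ha2n hb2n]
    exact tsum_congr (fun p => by simp [hwdef, mul_pow])
  rw [eFG, eF, eG, e2] at key
  exact key
end

section
/- For the composite Bernstein cubature functional $\overline{\mathcal{I}}$ and bounded functions $f, g$ on $[0,1]^2$: $|\overline{\mathcal{I}}(fg) - \overline{\mathcal{I}}(f)\overline{\mathcal{I}}(g)| \le \frac{1}{2}\left(1 - \frac{1}{m_1 m_2 (n_1+1)(n_2+1)}\right)\mathrm{osc}(f)\,\mathrm{osc}(g)$, where $\mathrm{osc}(f)$ is the supremum of $|f(P) - f(Q)|$ over all pairs of cubature nodes $P, Q$. -/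
open Finset

/-- The composite Bernstein cubature functional on `[0,1]²`. -/
noncomputable def Ibar (n₁ n₂ m₁ m₂ : ℕ) (f : ℝ → ℝ → ℝ) : ℝ :=
  (1 / ((m₁ : ℝ) * m₂ * (n₁ + 1) * (n₂ + 1))) *
    ∑ k ∈ Finset.Icc 1 m₁, ∑ l ∈ Finset.Icc 1 m₂,
      ∑ i ∈ Finset.range (n₁ + 1), ∑ j ∈ Finset.range (n₂ + 1),
        f (((k : ℝ) - 1) / m₁ + (i : ℝ) / (m₁ * n₁))
          (((l : ℝ) - 1) / m₂ + (j : ℝ) / (m₂ * n₂))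

/-- Oscillation of `f` over the cubature nodes of `Ibar`. -/
noncomputable def oscNodes (n₁ n₂ m₁ m₂ : ℕ) (f : ℝ → ℝ → ℝ) : ℝ :=
  sSup {v | ∃ k ∈ Finset.Icc 1 m₁, ∃ l ∈ Finset.Icc 1 m₂,
    ∃ i ∈ Finset.range (n₁ + 1), ∃ j ∈ Finset.range (n₂ + 1),
    ∃ k' ∈ Finset.Icc 1 m₁, ∃ l' ∈ Finset.Icc 1 m₂,
    ∃ i' ∈ Finset.range (n₁ + 1), ∃ j' ∈ Finset.range (n₂ + 1),
    v = |f (((k : ℝ) - 1) / m₁ + (i : ℝ) / (m₁ * n₁))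
            (((l : ℝ) - 1) / m₂ + (j : ℝ) / (m₂ * n₂)) -
          f (((k' : ℝ) - 1) / m₁ + (i' : ℝ) / (m₁ * n₁))
            (((l' : ℝ) - 1) / m₂ + (j' : ℝ) / (m₂ * n₂))|}



lemma gruss_aux {ι : Type*} [DecidableEq ι] (s : Finset ι) (F G : ι → ℝ) (Of Og : ℝ)
    (hF : ∀ a ∈ s, ∀ b ∈ s, |F a - F b| ≤ Of)
    (hG : ∀ a ∈ s, ∀ b ∈ s, |G a - G b| ≤ Og) (hOg : 0 ≤ Og) :
    |(s.card : ℝ) * ∑ a ∈ s, F a * G a - (∑ a ∈ s, F a) * (∑ a ∈ s, G a)| ≤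
      (1/2) * ((s.card : ℝ)^2 - s.card) * (Of * Og) := by
  have key : ∑ a ∈ s, ∑ b ∈ s, (F a - F b) * (G a - G b)
      = 2 * ((s.card : ℝ) * ∑ a ∈ s, F a * G a - (∑ a ∈ s, F a) * (∑ a ∈ s, G a)) := by
    have h1 : ∀ a ∈ s, ∑ b ∈ s, (F a - F b) * (G a - G b)
        = (s.card : ℝ) * (F a * G a) - F a * (∑ b ∈ s, G b)
          - (∑ b ∈ s, F b) * G a + ∑ b ∈ s, F b * G b := by
      intro a _
      rw [Finset.sum_congr rfl (fun b _ => (by ring :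
        (F a - F b) * (G a - G b) = F a * G a - F a * G b - F b * G a + F b * G b))]
      simp [Finset.sum_add_distrib, Finset.sum_sub_distrib, ← Finset.mul_sum,
        ← Finset.sum_mul, Finset.sum_const, nsmul_eq_mul]
    rw [Finset.sum_congr rfl h1]
    simp [Finset.sum_add_distrib, Finset.sum_sub_distrib, ← Finset.mul_sum,
      ← Finset.sum_mul, Finset.sum_const, nsmul_eq_mul]
    ring
  have hbd : ∀ a ∈ s, ∀ b ∈ s, |(F a - F b) * (G a - G b)|
      ≤ if a = b then 0 else Of * Og := by
    intro a ha b hb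
    by_cases h : a = b
    · simp [h]
    · simp only [h, if_false]
      rw [abs_mul]
      exact mul_le_mul (hF a ha b hb) (hG a ha b hb) (abs_nonneg _)
        (le_trans (abs_nonneg _) (hF a ha b hb))
  have hsum : ∑ a ∈ s, ∑ b ∈ s, (if a = b then (0:ℝ) else Of * Og)
      = ((s.card : ℝ)^2 - s.card) * (Of * Og) := by
    have h2 : ∀ a ∈ s, ∑ b ∈ s, (if a = b then (0:ℝ) else Of * Og)
        = ((s.card : ℝ) - 1) * (Of * Og) := by
      intro a ha
      have : ∀ b ∈ s, (if a = b then (0:ℝ) else Of * Og)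
          = Of * Og - (if a = b then Of * Og else 0) := by
        intro b _; by_cases h : a = b <;> simp [h]
      rw [Finset.sum_congr rfl this, Finset.sum_sub_distrib, Finset.sum_ite_eq,
        if_pos ha, Finset.sum_const, nsmul_eq_mul]
      ring
    rw [Finset.sum_congr rfl h2, Finset.sum_const, nsmul_eq_mul]
    ring
  have habs : |∑ a ∈ s, ∑ b ∈ s, (F a - F b) * (G a - G b)|
      ≤ ((s.card : ℝ)^2 - s.card) * (Of * Og) := by
    calc |∑ a ∈ s, ∑ b ∈ s, (F a - F b) * (G a - G b)|
        ≤ ∑ a ∈ s, |∑ b ∈ s, (F a - F b) * (G a - G b)| := Finset.abs_sum_le_sum_abs _ _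
      _ ≤ ∑ a ∈ s, ∑ b ∈ s, |(F a - F b) * (G a - G b)| :=
          Finset.sum_le_sum (fun a _ => Finset.abs_sum_le_sum_abs _ _)
      _ ≤ ∑ a ∈ s, ∑ b ∈ s, (if a = b then (0:ℝ) else Of * Og) :=
          Finset.sum_le_sum (fun a ha => Finset.sum_le_sum (fun b hb => hbd a ha b hb))
      _ = _ := hsum
  rw [show (s.card : ℝ) * ∑ a ∈ s, F a * G a - (∑ a ∈ s, F a) * (∑ a ∈ s, G a)
      = (1/2) * ∑ a ∈ s, ∑ b ∈ s, (F a - F b) * (G a - G b) by rw [key]; ring]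
  rw [abs_mul, abs_of_nonneg (by norm_num : (0:ℝ) ≤ (1:ℝ)/2)]
  nlinarith [habs]


/-- Chebyshev–Grüss inequality with discrete oscillations for the composite
Bernstein cubature functional. -/
theorem stmt16 (n₁ n₂ m₁ m₂ : ℕ) (hn₁ : 0 < n₁) (hn₂ : 0 < n₂)
    (hm₁ : 0 < m₁) (hm₂ : 0 < m₂) (f g : ℝ → ℝ → ℝ)
    (hf : ∃ C : ℝ, ∀ p q : ℝ, |f p q| ≤ C) (hg : ∃ C : ℝ, ∀ p q : ℝ, |g p q| ≤ C) :
    |Ibar n₁ n₂ m₁ m₂ (fun s t => f s t * g s t) -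
        Ibar n₁ n₂ m₁ m₂ f * Ibar n₁ n₂ m₁ m₂ g| ≤
      (1 / 2) * (1 - 1 / ((m₁ : ℝ) * m₂ * (n₁ + 1) * (n₂ + 1))) *
        oscNodes n₁ n₂ m₁ m₂ f * oscNodes n₁ n₂ m₁ m₂ g := by
  set s : Finset (ℕ × ℕ × ℕ × ℕ) :=
    Finset.Icc 1 m₁ ×ˢ (Finset.Icc 1 m₂ ×ˢ (Finset.range (n₁+1) ×ˢ Finset.range (n₂+1)))
    with hs
  set X : ℕ × ℕ × ℕ × ℕ → ℝ :=
    fun p => ((p.1 : ℝ) - 1) / m₁ + (p.2.2.1 : ℝ) / (m₁ * n₁) with hX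
  set Y : ℕ × ℕ × ℕ × ℕ → ℝ :=
    fun p => ((p.2.1 : ℝ) - 1) / m₂ + (p.2.2.2 : ℝ) / (m₂ * n₂) with hY
  set N : ℝ := (m₁ : ℝ) * m₂ * (n₁ + 1) * (n₂ + 1) with hN
  have hNpos : 0 < N := by
    have := hm₁; have := hm₂
    positivity
  have hcard : (s.card : ℝ) = N := by
    simp [hs, hN, Finset.card_product, Nat.card_Icc]
    push_cast; ring
  have hsum : ∀ h : ℝ → ℝ → ℝ,
      Ibar n₁ n₂ m₁ m₂ h = (1/N) * ∑ p ∈ s, h (X p) (Y p) := by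
    intro h
    rw [Ibar, hs]
    rw [Finset.sum_product]
    congr 1
    refine Finset.sum_congr rfl fun k _ => ?_
    rw [Finset.sum_product]
    refine Finset.sum_congr rfl fun l _ => ?_
    rw [Finset.sum_product]
  -- membership in the osc set
  have hmemset : ∀ p ∈ s, ∀ q ∈ s, (∀ F : ℝ → ℝ → ℝ,
      |F (X p) (Y p) - F (X q) (Y q)| ∈ {v | ∃ k ∈ Finset.Icc 1 m₁, ∃ l ∈ Finset.Icc 1 m₂,
      ∃ i ∈ Finset.range (n₁ + 1), ∃ j ∈ Finset.range (n₂ + 1),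
      ∃ k' ∈ Finset.Icc 1 m₁, ∃ l' ∈ Finset.Icc 1 m₂,
      ∃ i' ∈ Finset.range (n₁ + 1), ∃ j' ∈ Finset.range (n₂ + 1),
      v = |F (((k : ℝ) - 1) / m₁ + (i : ℝ) / (m₁ * n₁))
              (((l : ℝ) - 1) / m₂ + (j : ℝ) / (m₂ * n₂)) -
            F (((k' : ℝ) - 1) / m₁ + (i' : ℝ) / (m₁ * n₁))
              (((l' : ℝ) - 1) / m₂ + (j' : ℝ) / (m₂ * n₂))|}) := by
    intro p hp q hq F
    obtain ⟨k, l, i, j⟩ := p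
    obtain ⟨k', l', i', j'⟩ := q
    simp only [hs, Finset.mem_product] at hp hq
    exact ⟨k, hp.1, l, hp.2.1, i, hp.2.2.1, j, hp.2.2.2,
      k', hq.1, l', hq.2.1, i', hq.2.2.1, j', hq.2.2.2, rfl⟩
  have hbdd : ∀ (F : ℝ → ℝ → ℝ), (∃ C : ℝ, ∀ p q : ℝ, |F p q| ≤ C) →
      BddAbove {v | ∃ k ∈ Finset.Icc 1 m₁, ∃ l ∈ Finset.Icc 1 m₂,
      ∃ i ∈ Finset.range (n₁ + 1), ∃ j ∈ Finset.range (n₂ + 1),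
      ∃ k' ∈ Finset.Icc 1 m₁, ∃ l' ∈ Finset.Icc 1 m₂,
      ∃ i' ∈ Finset.range (n₁ + 1), ∃ j' ∈ Finset.range (n₂ + 1),
      v = |F (((k : ℝ) - 1) / m₁ + (i : ℝ) / (m₁ * n₁))
              (((l : ℝ) - 1) / m₂ + (j : ℝ) / (m₂ * n₂)) -
            F (((k' : ℝ) - 1) / m₁ + (i' : ℝ) / (m₁ * n₁))
              (((l' : ℝ) - 1) / m₂ + (j' : ℝ) / (m₂ * n₂))|} := by
    rintro F ⟨C, hC⟩
    refine ⟨2 * C, ?_⟩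
    rintro v ⟨k, _, l, _, i, _, j, _, k', _, l', _, i', _, j', _, rfl⟩
    calc |F _ _ - F _ _| ≤ |F _ _| + |F _ _| := abs_sub _ _
      _ ≤ C + C := add_le_add (hC _ _) (hC _ _)
      _ = 2 * C := by ring
  have hp0 : ((1:ℕ), (1:ℕ), (0:ℕ), (0:ℕ)) ∈ s := by
    simp [hs, Finset.mem_product, Finset.mem_Icc, hm₁, hm₂, Nat.succ_le_iff]
  have hFbd : ∀ p ∈ s, ∀ q ∈ s, |f (X p) (Y p) - f (X q) (Y q)| ≤ oscNodes n₁ n₂ m₁ m₂ f :=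
    fun p hp q hq => le_csSup (hbdd f hf) (hmemset p hp q hq f)
  have hGbd : ∀ p ∈ s, ∀ q ∈ s, |g (X p) (Y p) - g (X q) (Y q)| ≤ oscNodes n₁ n₂ m₁ m₂ g :=
    fun p hp q hq => le_csSup (hbdd g hg) (hmemset p hp q hq g)
  have hOfnn : 0 ≤ oscNodes n₁ n₂ m₁ m₂ f := by
    have := hFbd _ hp0 _ hp0; simpa using this
  have hOgnn : 0 ≤ oscNodes n₁ n₂ m₁ m₂ g := by
    have := hGbd _ hp0 _ hp0; simpa using this
  set F : ℕ × ℕ × ℕ × ℕ → ℝ := fun p => f (X p) (Y p)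
  set G : ℕ × ℕ × ℕ × ℕ → ℝ := fun p => g (X p) (Y p)
  have hgr := gruss_aux s F G (oscNodes n₁ n₂ m₁ m₂ f) (oscNodes n₁ n₂ m₁ m₂ g)
    hFbd hGbd hOgnn
  rw [hcard] at hgr
  rw [hsum, hsum, hsum]
  have heq : (1/N) * ∑ p ∈ s, F p * G p - ((1/N) * ∑ p ∈ s, F p) * ((1/N) * ∑ p ∈ s, G p)
      = (1/N^2) * (N * ∑ p ∈ s, F p * G p - (∑ p ∈ s, F p) * (∑ p ∈ s, G p)) := by
    field_simp
  show |(1/N) * ∑ p ∈ s, F p * G p - ((1/N) * ∑ p ∈ s, F p) * ((1/N) * ∑ p ∈ s, G p)| ≤ _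
  rw [heq, abs_mul, abs_of_nonneg (by positivity : (0:ℝ) ≤ 1/N^2)]
  calc (1/N^2) * |N * ∑ p ∈ s, F p * G p - (∑ p ∈ s, F p) * (∑ p ∈ s, G p)|
      ≤ (1/N^2) * ((1/2) * (N^2 - N) * (oscNodes n₁ n₂ m₁ m₂ f * oscNodes n₁ n₂ m₁ m₂ g)) :=
        mul_le_mul_of_nonneg_left hgr (by positivity)
    _ = (1/2) * (1 - 1/N) * oscNodes n₁ n₂ m₁ m₂ f * oscNodes n₁ n₂ m₁ m₂ g := by
        field_simp
end
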